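/- Let f : ℝ^d → ℝ be differentiable with L-Lipschitz gradient, let 0 < σ ≤ L, set κ = L/σ and ω = (√κ − 1)/(√κ + 1), and define iterates by x₀ = y₀ and, for s ≥ 1, y_s = x_{s−1} − (1/L)∇f(x_{s−1}) and x_s = y_s + ω(y_s − y_{s−1}). Define the estimate functions Φ₀(z) = f(x₀) + (σ/2)‖z − x₀‖² and Φ_{s+1}(z) = (1 − 1/√κ)Φ_s(z) + (1/√κ)[f(x_s) + ∇f(x_s)ᵀ(z − x_s) + (σ/2)‖z − x_s‖²]. Fix t ≥ 0. If for every s = 0, 1, …, t−1 it holds that f(y_s) ≥ f(x_s) + ∇f(x_s)ᵀ(y_s − x_s) + (σ/2)‖y_s − x_s‖², then f(y_t) ≤ min_{z ∈ ℝ^d} Φ_t(z). -/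

import Mathlib

open scoped InnerProductSpace

lemma quad_identity {d : ℕ} (θ L : ℝ) (hθ : θ ≠ 0) (hL : L ≠ 0)
    (V X G z : EuclideanSpace ℝ (Fin d)) (P F : ℝ) :
    (1 - θ) * (P + (θ^2*L) / 2 * ‖z - V‖ ^ 2)
      + θ * (F + ⟪G, z - X⟫_ℝ + (θ^2*L) / 2 * ‖z - X‖ ^ 2)
    = ((1 - θ) * P + θ * F - 1 / (2 * L) * ‖G‖ ^ 2
        + θ * (1 - θ) * ((θ^2*L) / 2 * ‖X - V‖ ^ 2 + ⟪G, V - X⟫_ℝ))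
      + (θ^2*L) / 2 * ‖z - ((1 - θ) • V + θ • X - (θ / (θ^2*L)) • G)‖ ^ 2 := by
  simp only [← real_inner_self_eq_norm_sq]
  simp only [inner_sub_left, inner_sub_right, inner_add_left, inner_add_right,
    real_inner_smul_left, real_inner_smul_right]
  rw [real_inner_comm V z, real_inner_comm X z, real_inner_comm G z,
    real_inner_comm X V, real_inner_comm G V, real_inner_comm G X]
  field_simp
  ring

lemma smooth_upper_bound {d : ℕ} (f : EuclideanSpace ℝ (Fin d) → ℝ)
    (g : EuclideanSpace ℝ (Fin d) → EuclideanSpace ℝ (Fin d)) (L : ℝ) (hL : 0 < L)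
    (hgrad : ∀ x, HasGradientAt f (g x) x)
    (hlip : ∀ x y, ‖g x - g y‖ ≤ L * ‖x - y‖)
    (a b : EuclideanSpace ℝ (Fin d)) :
    f b ≤ f a + ⟪g a, b - a⟫_ℝ + L / 2 * ‖b - a‖ ^ 2 := by
  set c : ℝ → EuclideanSpace ℝ (Fin d) := fun t => a + t • (b - a) with hc
  have hcd : ∀ t : ℝ, HasDerivAt c (b - a) t := by
    intro t
    have := ((hasDerivAt_id t).smul_const (b - a)).const_add a
    rw [one_smul] at this
    exact this
  have hφd : ∀ t : ℝ, HasDerivAt (fun t => f (c t)) ⟪g (c t), b - a⟫_ℝ t := by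
    intro t
    have := (hgrad (c t)).hasFDerivAt.comp_hasDerivAt t (hcd t)
    exact this
  have hgc : Continuous g := by
    have : LipschitzWith L.toNNReal g := by
      rw [lipschitzWith_iff_dist_le_mul]
      intro u v
      rw [dist_eq_norm, dist_eq_norm]
      calc ‖g u - g v‖ ≤ L * ‖u - v‖ := hlip u v
        _ = L.toNNReal * ‖u - v‖ := by rw [Real.coe_toNNReal _ hL.le]
    exact this.continuous
  have hcont : Continuous fun t : ℝ => ⟪g (c t), b - a⟫_ℝ := by
    exact (Continuous.inner (hgc.comp (by continuity)) continuous_const)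
  have hint : f b - f a = ∫ t in (0:ℝ)..1, ⟪g (c t), b - a⟫_ℝ := by
    have := intervalIntegral.integral_eq_sub_of_hasDerivAt
      (f := fun t => f (c t)) (f' := fun t => ⟪g (c t), b - a⟫_ℝ)
      (a := 0) (b := 1) (fun t _ => hφd t) (hcont.intervalIntegrable 0 1)
    rw [this]
    simp [hc]
  have hbound : ∀ t ∈ Set.Icc (0:ℝ) 1,
      ⟪g (c t), b - a⟫_ℝ ≤ ⟪g a, b - a⟫_ℝ + L * t * ‖b - a‖ ^ 2 := by
    intro t ht
    have h1 : ⟪g (c t) - g a, b - a⟫_ℝ ≤ ‖g (c t) - g a‖ * ‖b - a‖ :=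
      real_inner_le_norm _ _
    have h2 : ‖g (c t) - g a‖ ≤ L * (t * ‖b - a‖) := by
      have := hlip (c t) a
      simpa [hc, norm_smul, abs_of_nonneg ht.1] using this
    have h3 : ⟪g (c t) - g a, b - a⟫_ℝ = ⟪g (c t), b - a⟫_ℝ - ⟪g a, b - a⟫_ℝ := by
      simp [inner_sub_left]
    nlinarith [norm_nonneg (b - a), mul_le_mul_of_nonneg_right h2 (norm_nonneg (b - a))]
  have hmono : (∫ t in (0:ℝ)..1, ⟪g (c t), b - a⟫_ℝ)
      ≤ ∫ t in (0:ℝ)..1, (⟪g a, b - a⟫_ℝ + L * t * ‖b - a‖ ^ 2) := by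
    apply intervalIntegral.integral_mono_on (by norm_num)
      (hcont.intervalIntegrable 0 1)
      (intervalIntegrable_const.add (((continuous_const.mul continuous_id').intervalIntegrable 0 1).mul_const _))
    exact hbound
  have hval : (∫ t in (0:ℝ)..1, (⟪g a, b - a⟫_ℝ + L * t * ‖b - a‖ ^ 2))
      = ⟪g a, b - a⟫_ℝ + L / 2 * ‖b - a‖ ^ 2 := by
    have h1 : (fun t : ℝ => ⟪g a, b - a⟫_ℝ + L * t * ‖b - a‖ ^ 2)
        = fun t : ℝ => ⟪g a, b - a⟫_ℝ + (L * ‖b - a‖ ^ 2) * t := by ext t; ring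
    rw [show (∫ t in (0:ℝ)..1, (⟪g a, b - a⟫_ℝ + L * t * ‖b - a‖ ^ 2))
        = ∫ t in (0:ℝ)..1, (⟪g a, b - a⟫_ℝ + (L * ‖b - a‖ ^ 2) * t) by rw [h1]]
    rw [intervalIntegral.integral_add (g := fun t : ℝ => (L * ‖b - a‖ ^ 2) * t) intervalIntegrable_const
      ((continuous_const.mul continuous_id').intervalIntegrable 0 1), intervalIntegral.integral_const,
      intervalIntegral.integral_const_mul, integral_id]
    simp [smul_eq_mul]
    ring
  linarith [hint, hmono, hval]

/-- The AGD iterate y_t lies below the minimum of the Nesterov estimate function Φ_t,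
provided the local strong-convexity inequalities hold at u = y_s for s < t. -/
theorem agd_below_estimate_sequence_min
    {d : ℕ} (f : EuclideanSpace ℝ (Fin d) → ℝ)
    (g : EuclideanSpace ℝ (Fin d) → EuclideanSpace ℝ (Fin d))
    (L σ : ℝ) (hσ : 0 < σ) (hσL : σ ≤ L)
    (hgrad : ∀ x, HasGradientAt f (g x) x)
    (hlip : ∀ x y, ‖g x - g y‖ ≤ L * ‖x - y‖)
    (κ ω : ℝ) (hκ : κ = L / σ)
    (hω : ω = (Real.sqrt κ - 1) / (Real.sqrt κ + 1))
    (x y : ℕ → EuclideanSpace ℝ (Fin d))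
    (hx0 : x 0 = y 0)
    (hy : ∀ s : ℕ, y (s + 1) = x s - (1 / L) • g (x s))
    (hx : ∀ s : ℕ, x (s + 1) = y (s + 1) + ω • (y (s + 1) - y s))
    (Φ : ℕ → EuclideanSpace ℝ (Fin d) → ℝ)
    (hΦ0 : ∀ z, Φ 0 z = f (x 0) + σ / 2 * ‖z - x 0‖ ^ 2)
    (hΦ : ∀ s z, Φ (s + 1) z = (1 - 1 / Real.sqrt κ) * Φ s z +
      (1 / Real.sqrt κ) * (f (x s) + ⟪g (x s), z - x s⟫_ℝ + σ / 2 * ‖z - x s‖ ^ 2))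
    (t : ℕ)
    (hconv : ∀ s, s < t →
      f (y s) ≥ f (x s) + ⟪g (x s), y s - x s⟫_ℝ + σ / 2 * ‖y s - x s‖ ^ 2) :
    ∀ z, f (y t) ≤ Φ t z := by
  have hL : 0 < L := lt_of_lt_of_le hσ hσL
  set sq := Real.sqrt κ with hsqdef
  have hκ1 : 1 ≤ κ := by rw [hκ]; exact (one_le_div hσ).2 hσL
  have hsq1 : 1 ≤ sq := by
    have h := Real.sqrt_le_sqrt hκ1
    rwa [Real.sqrt_one] at h
  have hsq0 : 0 < sq := lt_of_lt_of_le one_pos hsq1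
  have hsq2 : sq ^ 2 = κ := Real.sq_sqrt (by linarith)
  set θ := 1 / sq with hθdef
  have hθ0 : 0 < θ := by positivity
  have hθ1 : θ ≤ 1 := by
    rw [hθdef]
    rw [div_le_one hsq0]; exact hsq1
  have hθsq : θ * sq = 1 := by
    rw [hθdef]; field_simp
  have h1 : sq ^ 2 * σ = L := by
    rw [hsq2, hκ]; field_simp
  have hσθ : σ = θ ^ 2 * L := by
    rw [hθdef]
    field_simp
    linear_combination h1
  -- the minimizer sequence
  set v : ℕ → EuclideanSpace ℝ (Fin d) := fun s => x s + sq • (x s - y s) with hvdef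
  have hvrec : ∀ s, v (s + 1) = (1 - θ) • v s + θ • x s - (θ / σ) • g (x s) := by
    intro s
    simp only [hvdef]
    rw [hx s, hy s]
    have hLne : L ≠ 0 := ne_of_gt hL
    have hσne : σ ≠ 0 := ne_of_gt hσ
    have hsqne : sq ≠ 0 := ne_of_gt hsq0
    have hsq1ne : sq + 1 ≠ 0 := by positivity
    rw [hω, hθdef]
    match_scalars
    · field_simp
      ring
    · field_simp
      linear_combination (-1 - sq) * h1
    · field_simp
      ring
  -- closed form of the estimate sequence
  obtain ⟨p, hp0, hpS⟩ : ∃ p : ℕ → ℝ, p 0 = f (x 0) ∧ ∀ s, p (s + 1) =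
      (1 - θ) * p s + θ * f (x s) - 1 / (2 * L) * ‖g (x s)‖ ^ 2
        + θ * (1 - θ) * (σ / 2 * ‖x s - v s‖ ^ 2 + ⟪g (x s), v s - x s⟫_ℝ) :=
    ⟨fun n => Nat.rec (f (x 0)) (fun s ps =>
      (1 - θ) * ps + θ * f (x s) - 1 / (2 * L) * ‖g (x s)‖ ^ 2
        + θ * (1 - θ) * (σ / 2 * ‖x s - v s‖ ^ 2 + ⟪g (x s), v s - x s⟫_ℝ)) n,
      rfl, fun s => rfl⟩
  have key : ∀ s z, Φ s z = p s + σ / 2 * ‖z - v s‖ ^ 2 := by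
    intro s
    induction s with
    | zero =>
      intro z
      have hv0 : v 0 = x 0 := by simp [hvdef, hx0]
      rw [hΦ0, hp0, hv0]
    | succ s ih =>
      intro z
      rw [hΦ s z, ih z, hpS s, hvrec s]
      have := quad_identity θ L (ne_of_gt hθ0) (ne_of_gt hL)
        (v s) (x s) (g (x s)) z (p s) (f (x s))
      rw [← hσθ] at this
      exact this
  -- induction: f (y s) ≤ p s
  have hmain : ∀ s, s ≤ t → f (y s) ≤ p s := by
    intro s
    induction s with
    | zero => intro _; rw [hp0, hx0]
    | succ s ih =>
      intro hst
      have hIH : f (y s) ≤ p s := ih (Nat.le_of_succ_le hst)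
      have hc := hconv s hst
      -- descent step
      have hba : y (s + 1) - x s = -((1 / L) • g (x s)) := by
        rw [hy s]; abel
      have hdesc : f (y (s + 1)) ≤ f (x s) - 1 / (2 * L) * ‖g (x s)‖ ^ 2 := by
        have h := smooth_upper_bound f g L hL hgrad hlip (x s) (y (s + 1))
        rw [hba] at h
        have e1 : ⟪g (x s), -((1 / L) • g (x s))⟫_ℝ = -(1 / L) * ‖g (x s)‖ ^ 2 := by
          rw [inner_neg_right, real_inner_smul_right, real_inner_self_eq_norm_sq]; ring
        have e2 : ‖-((1 / L) • g (x s))‖ ^ 2 = (1 / L) ^ 2 * ‖g (x s)‖ ^ 2 := by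
          rw [norm_neg, norm_smul]
          rw [Real.norm_eq_abs, abs_of_pos (by positivity : (0:ℝ) < 1 / L)]
          ring
        rw [e1, e2] at h
        have e3 : -(1 / L) * ‖g (x s)‖ ^ 2 + L / 2 * ((1 / L) ^ 2 * ‖g (x s)‖ ^ 2)
            = -(1 / (2 * L)) * ‖g (x s)‖ ^ 2 := by
          field_simp; ring
        linarith
      have hvx : v s - x s = sq • (x s - y s) := by
        simp [hvdef]
      have e4 : ⟪g (x s), v s - x s⟫_ℝ = sq * -⟪g (x s), y s - x s⟫_ℝ := by
        rw [hvx, real_inner_smul_right]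
        simp [inner_sub_right]
      have e5 : ‖x s - v s‖ ^ 2 = sq ^ 2 * ‖y s - x s‖ ^ 2 := by
        have h1 : x s - v s = sq • (y s - x s) := by
          simp only [hvdef]; module
        rw [h1, norm_smul, Real.norm_eq_abs, abs_of_pos hsq0, mul_pow]
      rw [hpS s, e4, e5]
      obtain ⟨B, hB⟩ : ∃ B, ⟪g (x s), y s - x s⟫_ℝ = B := ⟨_, rfl⟩
      obtain ⟨C, hC⟩ : ∃ C, ‖y s - x s‖ ^ 2 = C := ⟨_, rfl⟩
      rw [hB] at e4 hc ⊢
      rw [hC] at e5 hc ⊢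
      have hCnn : 0 ≤ C := hC ▸ by positivity
      have e8 : θ * (1 - θ) * (σ / 2 * (sq ^ 2 * C) + sq * -B)
          = (1 - θ) * (σ / 2 * (sq * C) - B) := by
        linear_combination ((1 - θ) * (σ / 2 * (sq * C) - B)) * hθsq
      rw [e8]
      have h1θ : 0 ≤ 1 - θ := by linarith
      have hmul : (1 - θ) * (f (x s) + B + σ / 2 * C) ≤ (1 - θ) * p s := by
        apply mul_le_mul_of_nonneg_left _ h1θ
        linarith [hc, hIH]
      have hnn : 0 ≤ (1 - θ) * (σ / 2 * (sq * C)) - (1 - θ) * (σ / 2 * C) := by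
        have : (1 - θ) * (σ / 2 * (sq * C)) - (1 - θ) * (σ / 2 * C)
            = (1 - θ) * (σ / 2) * C * (sq - 1) := by ring
        rw [this]
        have : (0:ℝ) ≤ sq - 1 := by linarith
        positivity
      have h4 : 0 ≤ (1 - θ) * (σ / 2 * C) :=
        mul_nonneg h1θ (mul_nonneg (by positivity) hCnn)
      linarith [hmul, hdesc, hnn, h4]
  intro z
  rw [key t z]
  have h1 := hmain t le_rfl
  have h2 : 0 ≤ σ / 2 * ‖z - v t‖ ^ 2 := by positivity
  linarith
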